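/- Let (X, 𝔪) be a measurable space with all finite subsets in 𝔪 and X infinite. Let X* = 𝔪^β \ e(X) be the set of non-principal 𝔪-ultrafilters. Then every nonempty G_δ-subset of X* has nonempty interior in X*. -/

import Mathlib

open Set

def IsMFilter {X : Type*} [MeasurableSpace X] (p : Set (Set X)) : Prop :=
  (∀ A ∈ p, MeasurableSet A) ∧ ∅ ∉ p ∧ Set.univ ∈ p ∧
  (∀ A ∈ p, ∀ B : Set X, MeasurableSet B → A ⊆ B → B ∈ p) ∧
  (∀ A ∈ p, ∀ B ∈ p, A ∩ B ∈ p)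

def IsMUltrafilter {X : Type*} [MeasurableSpace X] (p : Set (Set X)) : Prop :=
  IsMFilter p ∧ ∀ q : Set (Set X), IsMFilter q → p ⊆ q → q = p

def MUltra (X : Type*) [MeasurableSpace X] : Type _ :=
  {p : Set (Set X) // IsMUltrafilter p}

def hatSet {X : Type*} [MeasurableSpace X] (A : Set X) : Set (MUltra X) :=
  {p | A ∈ p.1}

instance {X : Type*} [MeasurableSpace X] : TopologicalSpace (MUltra X) :=
  TopologicalSpace.generateFrom {U | ∃ A : Set X, MeasurableSet A ∧ U = hatSet A}

instance {X : Type*} [MeasurableSpace X] : MeasurableSpace (MUltra X) :=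
  MeasurableSpace.generateFrom {U | ∃ A : Set X, MeasurableSet A ∧ U = hatSet A}

def principalUF {X : Type*} [MeasurableSpace X] (x : X) : Set (Set X) :=
  {A | MeasurableSet A ∧ x ∈ A}

theorem principalUF_ultra {X : Type*} [MeasurableSpace X] (x : X) :
    IsMUltrafilter (principalUF x) := by
  constructor
  · refine ⟨fun A hA => hA.1, ?_, ⟨MeasurableSet.univ, trivial⟩, ?_, ?_⟩
    · intro h; exact h.2
    · intro A hA B hB hAB; exact ⟨hB, hAB hA.2⟩
    · intro A hA B hB; exact ⟨hA.1.inter hB.1, hA.2, hB.2⟩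
  · intro q hq hpq
    refine Set.Subset.antisymm ?_ hpq
    intro A hAq
    have hAm : MeasurableSet A := hq.1 A hAq
    by_contra hx
    have hxc : x ∈ Aᶜ := fun h => hx ⟨hAm, h⟩
    have hcq : Aᶜ ∈ q := hpq ⟨hAm.compl, hxc⟩
    have hint : A ∩ Aᶜ ∈ q := hq.2.2.2.2 A hAq Aᶜ hcq
    rw [Set.inter_compl_self] at hint
    exact hq.2.1 hint

def princ {X : Type*} [MeasurableSpace X] (x : X) : MUltra X :=
  ⟨principalUF x, principalUF_ultra x⟩

section Aux
variable {X : Type*} [MeasurableSpace X]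

lemma countable_measurableSet (hfin : ∀ F : Set X, F.Finite → MeasurableSet F)
    {A : Set X} (hA : A.Countable) : MeasurableSet A := by
  rw [← Set.biUnion_of_singleton A]
  exact MeasurableSet.biUnion hA fun x _ => hfin {x} (Set.finite_singleton x)

lemma mem_or_compl_mem {p : Set (Set X)} (hp : IsMUltrafilter p) {A : Set X}
    (hA : MeasurableSet A) : A ∈ p ∨ Aᶜ ∈ p := by
  by_cases h : Aᶜ ∈ p
  · exact Or.inr h
  · left
    set q : Set (Set X) := {B | MeasurableSet B ∧ ∃ C ∈ p, A ∩ C ⊆ B} with hqdef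
    have hqf : IsMFilter q := by
      refine ⟨fun B hB => hB.1, ?_, ⟨MeasurableSet.univ, Set.univ, hp.1.2.2.1, Set.subset_univ _⟩,
        ?_, ?_⟩
      · rintro ⟨-, C, hC, hAC⟩
        have hsub : C ⊆ Aᶜ := fun x hx hxA => hAC ⟨hxA, hx⟩
        exact h (hp.1.2.2.2.1 C hC Aᶜ hA.compl hsub)
      · rintro B ⟨hBm, C, hC, hABC⟩ B' hB' hBB'
        exact ⟨hB', C, hC, hABC.trans hBB'⟩
      · rintro B ⟨hBm, C, hC, hABC⟩ B' ⟨hB'm, C', hC', hABC'⟩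
        exact ⟨hBm.inter hB'm, C ∩ C', hp.1.2.2.2.2 C hC C' hC', fun x hx =>
          ⟨hABC ⟨hx.1, hx.2.1⟩, hABC' ⟨hx.1, hx.2.2⟩⟩⟩
    have hpq : p ⊆ q := fun B hB => ⟨hp.1.1 B hB, B, hB, Set.inter_subset_right⟩
    have hqp := hp.2 q hqf hpq
    rw [← hqp]
    exact ⟨hA, Set.univ, hp.1.2.2.1, Set.inter_subset_left⟩

lemma eq_principal_of_finite_mem (hfin : ∀ F : Set X, F.Finite → MeasurableSet F)
    {p : Set (Set X)} (hp : IsMUltrafilter p)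
    {F : Set X} (hF : F.Finite) (hFp : F ∈ p) : ∃ x, p = principalUF x := by
  have key : ∀ n : ℕ, ∀ F : Set X, F.Finite → F.ncard ≤ n → F ∈ p → ∃ x, p = principalUF x := by
    intro n
    induction n with
    | zero =>
      intro F hF hcard hFp
      have : F = ∅ := (Set.ncard_eq_zero hF).mp (Nat.le_zero.mp hcard)
      exact absurd (this ▸ hFp) hp.1.2.1
    | succ n ih =>
      intro F hF hcard hFp
      have hFne : F.Nonempty := by
        rcases F.eq_empty_or_nonempty with rfl | h
        · exact absurd hFp hp.1.2.1
        · exact h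
      obtain ⟨x, hxF⟩ := hFne
      by_cases hx : {x} ∈ p
      · refine ⟨x, ?_⟩
        ext A
        constructor
        · intro hA
          refine ⟨hp.1.1 A hA, ?_⟩
          have hint : A ∩ {x} ∈ p := hp.1.2.2.2.2 A hA {x} hx
          have hne' : (A ∩ {x}).Nonempty := by
            rcases (A ∩ {x}).eq_empty_or_nonempty with he | h
            · exact absurd (he ▸ hint) hp.1.2.1
            · exact h
          obtain ⟨y, hyA, hyx⟩ := hne'
          rwa [← hyx]
        · rintro ⟨hAm, hxA⟩
          exact hp.1.2.2.2.1 {x} hx A hAm (Set.singleton_subset_iff.mpr hxA)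
      · have hxc : {x}ᶜ ∈ p :=
          (mem_or_compl_mem hp (hfin {x} (Set.finite_singleton x))).resolve_left hx
        have hdiff : F \ {x} ∈ p := by
          have := hp.1.2.2.2.2 F hFp {x}ᶜ hxc
          simpa [Set.diff_eq] using this
        refine ih (F \ {x}) hF.diff ?_ hdiff
        have hlt := Set.ncard_diff_singleton_lt_of_mem hxF hF
        omega
  exact key F.ncard F hF le_rfl hFp

lemma exists_ultra_ext {f : Set (Set X)} (hf : IsMFilter f) :
    ∃ p, IsMUltrafilter p ∧ f ⊆ p := by
  obtain ⟨m, hfm, hmS, hmax⟩ := zorn_subset_nonempty {q : Set (Set X) | IsMFilter q}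
    (fun c hcS hchain hcne => by
      obtain ⟨q₀, hq₀⟩ := hcne
      refine ⟨⋃₀ c, ⟨?_, ?_, ?_, ?_, ?_⟩, fun s hs => Set.subset_sUnion_of_mem hs⟩
      · rintro A ⟨q, hq, hA⟩; exact (hcS hq).1 A hA
      · rintro ⟨q, hq, hA⟩; exact (hcS hq).2.1 hA
      · exact ⟨q₀, hq₀, (hcS hq₀).2.2.1⟩
      · rintro A ⟨q, hq, hA⟩ B hBm hAB
        exact ⟨q, hq, (hcS hq).2.2.2.1 A hA B hBm hAB⟩
      · rintro A ⟨q, hq, hA⟩ B ⟨q', hq', hB⟩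
        rcases hchain.total hq hq' with h | h
        · exact ⟨q', hq', (hcS hq').2.2.2.2 A (h hA) B hB⟩
        · exact ⟨q, hq, (hcS hq).2.2.2.2 A hA B (h hB)⟩) f hf
  exact ⟨m, ⟨hmS, fun q hq hmq => (hmax hq hmq).antisymm hmq⟩, hfm⟩

lemma exists_basic {V : Set (MUltra X)} (hV : IsOpen V) :
    ∀ q ∈ V, ∃ A : Set X, MeasurableSet A ∧ A ∈ q.1 ∧ hatSet A ⊆ V := by
  have hV' : TopologicalSpace.GenerateOpen
      {U | ∃ A : Set X, MeasurableSet A ∧ U = hatSet A} V := hV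
  clear hV
  induction hV' with
  | basic U hU =>
    obtain ⟨A, hAm, rfl⟩ := hU
    exact fun q hq => ⟨A, hAm, hq, subset_rfl⟩
  | univ => exact fun q _ => ⟨Set.univ, MeasurableSet.univ, q.2.1.2.2.1, Set.subset_univ _⟩
  | inter U W hU hW ihU ihW =>
    intro q hq
    obtain ⟨A, hAm, hAq, hAU⟩ := ihU q hq.1
    obtain ⟨B, hBm, hBq, hBW⟩ := ihW q hq.2
    refine ⟨A ∩ B, hAm.inter hBm, q.2.1.2.2.2.2 A hAq B hBq, fun r hr =>
      ⟨hAU (r.2.1.2.2.2.1 _ hr A hAm Set.inter_subset_left),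
       hBW (r.2.1.2.2.2.1 _ hr B hBm Set.inter_subset_right)⟩⟩
  | sUnion S hS ih =>
    rintro q ⟨U, hUS, hqU⟩
    obtain ⟨A, h1, h2, h3⟩ := ih U hUS q hqU
    exact ⟨A, h1, h2, h3.trans (Set.subset_sUnion_of_mem hUS)⟩

end Aux

noncomputable def seqPick {X : Type*} [Nonempty X] (B : ℕ → Set X) : ℕ → X
  | n => Classical.epsilon (fun x => x ∈ B n ∧ ∀ k, k < n → x ≠ seqPick B k)

lemma seqPick_spec {X : Type*} [Nonempty X] {B : ℕ → Set X} (hB : ∀ n, (B n).Infinite) (n : ℕ) :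
    seqPick B n ∈ B n ∧ ∀ k, k < n → seqPick B n ≠ seqPick B k := by
  rw [seqPick]
  apply Classical.epsilon_spec (p := fun x => x ∈ B n ∧ ∀ k, k < n → x ≠ seqPick B k)
  have hne : ((B n) \ (seqPick B '' {k | k < n})).Nonempty :=
    ((hB n).diff ((Set.finite_Iio n).image _)).nonempty
  obtain ⟨x, hx1, hx2⟩ := hne
  exact ⟨x, hx1, fun k hk hxk => hx2 ⟨k, hk, hxk.symm⟩⟩

theorem stmt15 {X : Type*} [MeasurableSpace X] [Infinite X]
    (hfin : ∀ F : Set X, F.Finite → MeasurableSet F)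
    (G : Set ↥((Set.range (princ : X → MUltra X))ᶜ))
    (hG : IsGδ G) (hne : G.Nonempty) :
    (interior G).Nonempty := by
  classical
  obtain ⟨p, hpG⟩ := hne
  obtain ⟨U, hUopen, hGeq⟩ := isGδ_iff_eq_iInter_nat.mp hG
  -- non-principal ultrafilters contain no finite sets
  have hnofin : ∀ q : ↥((Set.range (princ : X → MUltra X))ᶜ),
      ∀ F ∈ q.1.1, ¬ F.Finite := by
    intro q F hF hFfin
    obtain ⟨x, hx⟩ := eq_principal_of_finite_mem hfin q.1.2 hFfin hF
    exact q.2 ⟨x, (Subtype.ext hx).symm⟩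
  -- choose basic open sets
  have hU' : ∀ n, ∃ V : Set (MUltra X), IsOpen V ∧ Subtype.val ⁻¹' V = U n :=
    fun n => isOpen_induced_iff.mp (hUopen n)
  choose V hVopen hVeq using hU'
  have hpU : ∀ n, p ∈ U n := by
    rw [hGeq] at hpG
    exact fun n => Set.mem_iInter.mp hpG n
  have hpV : ∀ n, p.1 ∈ V n := by
    intro n
    have := hpU n
    rw [← hVeq n] at this
    exact this
  choose A hAm hAp hAsub using fun n => exists_basic (hVopen n) p.1 (hpV n)
  set B : ℕ → Set X := fun n => ⋂ k ∈ Finset.range (n + 1), A k with hBdef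
  have hBmem : ∀ (x : X) (n : ℕ), x ∈ B n ↔ ∀ k ≤ n, x ∈ A k := by
    intro x n
    simp [hBdef, Nat.lt_succ_iff]
  have hBm : ∀ n, MeasurableSet (B n) :=
    fun n => Finset.measurableSet_biInter _ fun k _ => hAm k
  have hBp : ∀ n, B n ∈ p.1.1 := by
    intro n
    induction n with
    | zero => simpa [hBdef] using hAp 0
    | succ n ih =>
      have hint := p.1.2.1.2.2.2.2 _ ih _ (hAp (n + 1))
      have he : B (n + 1) = B n ∩ A (n + 1) := by
        ext x
        simp only [hBmem, Set.mem_inter_iff]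
        constructor
        · intro h; exact ⟨fun k hk => h k (hk.trans (Nat.le_succ n)), h (n + 1) le_rfl⟩
        · rintro ⟨h1, h2⟩ k hk
          rcases Nat.lt_succ_iff_lt_or_eq.mp (Nat.lt_succ_of_le hk) with h | rfl
          · exact h1 k (Nat.lt_succ_iff.mp h)
          · exact h2
      rw [he]
      exact hint
  have hBsubA : ∀ n, B n ⊆ A n := fun n x hx => (hBmem x n).mp hx n le_rfl
  have hBanti : ∀ m n, m ≤ n → B n ⊆ B m := fun m n hmn x hx =>
    (hBmem x m).mpr fun k hk => (hBmem x n).mp hx k (hk.trans hmn)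
  have hBinf : ∀ n, (B n).Infinite := by
    intro n
    exact fun h => hnofin p (B n) (hBp n) h
  -- diagonal sequence
  have hNe : Nonempty X := inferInstance
  set f : ℕ → X := seqPick B with hfdef
  have hfspec := seqPick_spec hBinf
  have hfinj : Function.Injective f := by
    intro a b hab
    by_contra hne'
    rcases Nat.lt_or_ge a b with h | h
    · exact (hfspec b).2 a h hab.symm
    · exact (hfspec a).2 b (lt_of_le_of_ne h (Ne.symm hne')) hab
  set D : Set X := Set.range f with hDdef
  have hDm : MeasurableSet D := countable_measurableSet hfin (Set.countable_range f)
  have hDinf : D.Infinite := Set.infinite_range_of_injective hfinj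
  have hDdiff : ∀ n, (D \ B n).Finite := by
    intro n
    apply Set.Finite.subset ((Set.finite_Iio n).image f)
    rintro x ⟨⟨m, rfl⟩, hxB⟩
    refine ⟨m, ?_, rfl⟩
    by_contra hmn
    exact hxB (hBanti n m (Nat.le_of_not_lt fun h => hmn h) (hfspec m).1)
  -- the filter of measurable almost-supersets of D
  set f₀ : Set (Set X) := {C | MeasurableSet C ∧ (D \ C).Finite} with hf₀def
  have hf₀ : IsMFilter f₀ := by
    refine ⟨fun C hC => hC.1, ?_, ⟨MeasurableSet.univ, by simp⟩, ?_, ?_⟩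
    · rintro ⟨-, h⟩
      rw [Set.diff_empty] at h
      exact hDinf h
    · rintro C ⟨hCm, hCf⟩ C' hC'm hCC'
      exact ⟨hC'm, hCf.subset fun x hx => ⟨hx.1, fun h => hx.2 (hCC' h)⟩⟩
    · rintro C ⟨hCm, hCf⟩ C' ⟨hC'm, hC'f⟩
      refine ⟨hCm.inter hC'm, (hCf.union hC'f).subset ?_⟩
      rintro x ⟨hxD, hx⟩
      by_cases hC : x ∈ C
      · exact Or.inr ⟨hxD, fun h => hx ⟨hC, h⟩⟩
      · exact Or.inl ⟨hxD, hC⟩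
  obtain ⟨q, hq_ultra, hq_ext⟩ := exists_ultra_ext hf₀
  have hDq : D ∈ q := hq_ext ⟨hDm, by simp⟩
  -- q is non-principal
  have hq_np : (⟨q, hq_ultra⟩ : MUltra X) ∈ (Set.range (princ : X → MUltra X))ᶜ := by
    rintro ⟨x, hx⟩
    have hval : principalUF x = q := congrArg Subtype.val hx
    have hmem : {x}ᶜ ∈ q := hq_ext ⟨(hfin {x} (Set.finite_singleton x)).compl,
      (Set.finite_singleton x).subset fun y hy => not_not.mp hy.2⟩
    rw [← hval] at hmem
    exact hmem.2 rfl
  set Q : ↥((Set.range (princ : X → MUltra X))ᶜ) := ⟨⟨q, hq_ultra⟩, hq_np⟩ with hQdef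
  -- the witnessing open set
  set W : Set ↥((Set.range (princ : X → MUltra X))ᶜ) :=
    Subtype.val ⁻¹' hatSet D with hWdef
  have hWopen : IsOpen W := by
    refine IsOpen.preimage continuous_subtype_val ?_
    exact TopologicalSpace.GenerateOpen.basic _ ⟨D, hDm, rfl⟩
  have hWQ : Q ∈ W := hDq
  have hWG : W ⊆ G := by
    intro r hr
    rw [hGeq]
    refine Set.mem_iInter.mpr fun n => ?_
    have hBr : B n ∈ r.1.1 := by
      rcases mem_or_compl_mem r.1.2 (hBm n) with h | h
      · exact h
      · exact absurd ((hDdiff n).subset (by simp [Set.diff_eq])) (hnofin r _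
          (r.1.2.1.2.2.2.2 D hr (B n)ᶜ h))
    have hAr : A n ∈ r.1.1 := r.1.2.1.2.2.2.1 _ hBr _ (hAm n) (hBsubA n)
    have : r.1 ∈ V n := hAsub n hAr
    rw [← hVeq n]
    exact this
  exact ⟨Q, interior_maximal hWG hWopen hWQ⟩
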